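/- Suppose the extra data is a single point, i.e. X_ext consists of the single row x_extᵀ for some x_ext ∈ ℝ^d. If Π⊥_std x_ext is an eigenvector of Σ (i.e. Σ(Π⊥_std x_ext) = λ · Π⊥_std x_ext for some λ ≥ 0), then for every true parameter θ⋆ the augmented estimator does not have larger standard error than the standard estimator: L_std(θ̂_aug) ≤ L_std(θ̂_std). -/

import Mathlib

open Matrix BigOperators

/-- Standard (population) error of `θ` w.r.t. covariance `S` and true parameter `θstar`:
`(θ − θ⋆)ᵀ Σ (θ − θ⋆)`. -/
def Lstd {d : ℕ} (S : Matrix (Fin d) (Fin d) ℝ) (θstar θ : Fin d → ℝ) : ℝ :=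
  (θ - θstar) ⬝ᵥ S.mulVec (θ - θstar)

/-- `θ` is the minimum Euclidean-norm solution of the constraint `C`. -/
def IsMinNormInterp {d : ℕ} (C : (Fin d → ℝ) → Prop) (θ : Fin d → ℝ) : Prop :=
  C θ ∧ ∀ θ', C θ' → θ ⬝ᵥ θ ≤ θ' ⬝ᵥ θ'

/-- `P` is the orthogonal projection matrix onto `Null(X)`:
symmetric, idempotent, range contained in `Null(X)`, and fixing `Null(X)`. -/
def IsOrthProjNull {n d : ℕ} (X : Matrix (Fin n) (Fin d) ℝ)
    (P : Matrix (Fin d) (Fin d) ℝ) : Prop :=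
  Pᵀ = P ∧ P * P = P ∧ (∀ v, X.mulVec (P.mulVec v) = 0) ∧
    (∀ v, X.mulVec v = 0 → P.mulVec v = v)

/-- `P` is the orthogonal projection matrix onto `Null(X1) ∩ Null(X2)`. -/
def IsOrthProjNull2 {n m d : ℕ} (X1 : Matrix (Fin n) (Fin d) ℝ)
    (X2 : Matrix (Fin m) (Fin d) ℝ) (P : Matrix (Fin d) (Fin d) ℝ) : Prop :=
  Pᵀ = P ∧ P * P = P ∧ (∀ v, X1.mulVec (P.mulVec v) = 0 ∧ X2.mulVec (P.mulVec v) = 0) ∧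
    (∀ v, X1.mulVec v = 0 → X2.mulVec v = 0 → P.mulVec v = v)

lemma symm_dot {d : ℕ} {P : Matrix (Fin d) (Fin d) ℝ} (h : Pᵀ = P) (u w : Fin d → ℝ) :
    u ⬝ᵥ P.mulVec w = P.mulVec u ⬝ᵥ w := by
  rw [Matrix.dotProduct_mulVec, ← Matrix.mulVec_transpose, h]

lemma dot_self_nonneg' {d : ℕ} (v : Fin d → ℝ) : 0 ≤ v ⬝ᵥ v := by
  apply Finset.sum_nonneg; intro i _; exact mul_self_nonneg _

/-- Corollary 2, condition 3 (paper): if the single extra point is such that its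
projection onto the null space of the standard data is an eigenvector of the
covariance, augmentation does not increase standard error, for every true parameter. -/
theorem eigenvector_augmentation_safe {n d : ℕ}
    (Xstd : Matrix (Fin n) (Fin d) ℝ)
    (S : Matrix (Fin d) (Fin d) ℝ) (hS : S.PosSemidef)
    (Pstd : Matrix (Fin d) (Fin d) ℝ) (hPstd : IsOrthProjNull Xstd Pstd)
    (xext : Fin d → ℝ) (lam : ℝ) (hlam : 0 ≤ lam)
    (heig : S.mulVec (Pstd.mulVec xext) = lam • Pstd.mulVec xext)
    (θstar θstd θaug : Fin d → ℝ)
    (hstd : IsMinNormInterp (fun θ => Xstd.mulVec θ = Xstd.mulVec θstar) θstd)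
    (haug : IsMinNormInterp
      (fun θ => Xstd.mulVec θ = Xstd.mulVec θstar ∧ xext ⬝ᵥ θ = xext ⬝ᵥ θstar) θaug) :
    Lstd S θstar θaug ≤ Lstd S θstar θstd := by
  obtain ⟨hPsym, hPidem, hPnull, hPfix⟩ := hPstd
  obtain ⟨hc1, hmin1⟩ := hstd
  obtain ⟨⟨hc2a, hc2b⟩, hmin2⟩ := haug
  have hSsym : Sᵀ = S := by
    have h := hS.1
    ext i j
    have := congrFun (congrFun h i) j
    simpa using this
  set q : Fin d → ℝ := Pstd.mulVec xext with hq
  set t : Fin d → ℝ := Pstd.mulVec θstar with ht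
  have hPq : Pstd.mulVec q = q := by
    rw [hq, Matrix.mulVec_mulVec, hPidem]
  -- Step A : Pstd θstd = 0
  have hA : Pstd.mulVec θstd = 0 := by
    have hcons : Xstd.mulVec (θstd - Pstd.mulVec θstd) = Xstd.mulVec θstar := by
      rw [Matrix.mulVec_sub, hc1, hPnull, sub_zero]
    have hle := hmin1 _ hcons
    have hdot : θstd ⬝ᵥ Pstd.mulVec θstd = Pstd.mulVec θstd ⬝ᵥ Pstd.mulVec θstd := by
      conv_lhs => rw [← hPidem, ← Matrix.mulVec_mulVec]
      exact symm_dot hPsym _ _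
    simp only [sub_dotProduct, dotProduct_sub] at hle
    have hcomm : Pstd.mulVec θstd ⬝ᵥ θstd = θstd ⬝ᵥ Pstd.mulVec θstd :=
      dotProduct_comm _ _
    have hww : Pstd.mulVec θstd ⬝ᵥ Pstd.mulVec θstd ≤ 0 := by linarith
    exact dotProduct_self_eq_zero.mp (le_antisymm hww (dot_self_nonneg' _))
  -- Step B : θstd - θstar = -t
  have hstd_eq : θstd - θstar = -t := by
    have h0 : Xstd.mulVec (θstd - θstar) = 0 := by
      rw [Matrix.mulVec_sub, hc1, sub_self]
    have h1 := hPfix _ h0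
    rw [Matrix.mulVec_sub, hA, zero_sub, ← ht] at h1
    exact h1.symm
  -- Step C : the candidate g
  set r : ℝ := q ⬝ᵥ θstar with hr
  set Q : ℝ := q ⬝ᵥ q with hQdef
  set c : ℝ := r / Q with hc
  set g : Fin d → ℝ := -t + c • q with hg
  have hXg : Xstd.mulVec g = 0 := by
    rw [hg, Matrix.mulVec_add, Matrix.mulVec_neg, Matrix.mulVec_smul, ht, hq, hPnull, hPnull]
    simp
  have hPg : Pstd.mulVec g = g := hPfix _ hXg
  have hqt : q ⬝ᵥ t = r := by
    rw [ht, symm_dot hPsym, hPq, hr]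
  have hxg : xext ⬝ᵥ g = 0 := by
    have h1 : xext ⬝ᵥ g = q ⬝ᵥ g := by
      conv_lhs => rw [← hPg]
      rw [symm_dot hPsym xext g, ← hq]
    have h2 : q ⬝ᵥ g = -r + c * Q := by
      rw [hg, dotProduct_add, dotProduct_neg, dotProduct_smul, hqt,
        smul_eq_mul, hQdef]
    rw [h1, h2]
    by_cases hQ : Q = 0
    · have hq0 : q = 0 := dotProduct_self_eq_zero.mp hQ
      have hr0 : r = 0 := by rw [hr, hq0]; simp
      rw [hr0, hQ]; simp
    · rw [hc]; field_simp; ring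
  -- Step D : v := θaug - θstar - g is zero
  set v : Fin d → ℝ := θaug - θstar - g with hv
  have hXv : Xstd.mulVec v = 0 := by
    rw [hv, Matrix.mulVec_sub, Matrix.mulVec_sub, hc2a, hXg]
    simp
  have hxv : xext ⬝ᵥ v = 0 := by
    rw [hv, dotProduct_sub, dotProduct_sub, hc2b, hxg]
    simp
  have hPv : Pstd.mulVec v = v := hPfix _ hXv
  have hav : θaug ⬝ᵥ v = 0 := by
    by_cases hV : v ⬝ᵥ v = 0
    · rw [dotProduct_self_eq_zero.mp hV, dotProduct_zero]
    · have hVpos : 0 < v ⬝ᵥ v := lt_of_le_of_ne (dot_self_nonneg' v) (Ne.symm hV)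
      set s : ℝ := (θaug ⬝ᵥ v) / (v ⬝ᵥ v) with hs
      have hcons : Xstd.mulVec (θaug - s • v) = Xstd.mulVec θstar ∧
          xext ⬝ᵥ (θaug - s • v) = xext ⬝ᵥ θstar := by
        constructor
        · rw [Matrix.mulVec_sub, Matrix.mulVec_smul, hXv, smul_zero, sub_zero, hc2a]
        · rw [dotProduct_sub, dotProduct_smul, hxv, smul_zero, sub_zero, hc2b]
      have hle := hmin2 _ hcons
      simp only [sub_dotProduct, dotProduct_sub, smul_dotProduct,
        dotProduct_smul, smul_eq_mul] at hle
      have hcomm : v ⬝ᵥ θaug = θaug ⬝ᵥ v := dotProduct_comm _ _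
      rw [hcomm] at hle
      have hkey : 2 * s * (θaug ⬝ᵥ v) - s * s * (v ⬝ᵥ v) ≤ 0 := by nlinarith [hle]
      have heq : 2 * s * (θaug ⬝ᵥ v) - s * s * (v ⬝ᵥ v) =
          (θaug ⬝ᵥ v) * (θaug ⬝ᵥ v) / (v ⬝ᵥ v) := by
        rw [hs]; field_simp; ring
      rw [heq] at hkey
      have haa : (θaug ⬝ᵥ v) * (θaug ⬝ᵥ v) ≤ 0 := by
        have h := mul_nonpos_of_nonpos_of_nonneg hkey hVpos.le
        rwa [div_mul_cancel₀ _ (ne_of_gt hVpos)] at h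
      exact mul_self_eq_zero.mp (le_antisymm haa (mul_self_nonneg _))
  have hv0 : v = 0 := by
    have hθv : θstar ⬝ᵥ v = t ⬝ᵥ v := by
      conv_lhs => rw [← hPv]
      rw [symm_dot hPsym θstar v, ← ht]
    have hqv : q ⬝ᵥ v = 0 := by
      have h1 : q ⬝ᵥ v = xext ⬝ᵥ v := by
        conv_rhs => rw [← hPv]
        rw [symm_dot hPsym xext v, ← hq]
      rw [h1, hxv]
    have h1 : (θstar + g) ⬝ᵥ v = 0 := by
      rw [add_dotProduct, hθv, hg, add_dotProduct, neg_dotProduct,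
        smul_dotProduct, hqv, smul_eq_mul]
      ring
    have h2 : v ⬝ᵥ v = θaug ⬝ᵥ v - (θstar + g) ⬝ᵥ v := by
      rw [← sub_dotProduct]
      congr 1
      rw [hv]; abel
    rw [hav, h1, sub_zero] at h2
    exact dotProduct_self_eq_zero.mp h2
  have haug_eq : θaug - θstar = g := by
    have h : θaug - θstar - g = 0 := by rw [← hv]; exact hv0
    exact sub_eq_zero.mp h
  -- Step E : compute the errors
  have hSq : S.mulVec q = lam • q := by rw [hq]; exact heig
  have hqSt : q ⬝ᵥ S.mulVec t = lam * r := by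
    rw [symm_dot hSsym, hSq, smul_dotProduct, smul_eq_mul, hqt]
  have htSq : t ⬝ᵥ S.mulVec q = lam * r := by
    rw [hSq, dotProduct_smul, smul_eq_mul, dotProduct_comm, hqt]
  have hqSq : q ⬝ᵥ S.mulVec q = lam * Q := by
    rw [hSq, dotProduct_smul, smul_eq_mul, hQdef]
  rw [Lstd, Lstd, haug_eq, hstd_eq]
  have hRHS : -t ⬝ᵥ S.mulVec (-t) = t ⬝ᵥ S.mulVec t := by
    rw [Matrix.mulVec_neg, neg_dotProduct, dotProduct_neg, neg_neg]
  have hLHS : g ⬝ᵥ S.mulVec g =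
      t ⬝ᵥ S.mulVec t - 2 * c * (lam * r) + c * c * (lam * Q) := by
    simp only [hg, Matrix.mulVec_add, Matrix.mulVec_neg, Matrix.mulVec_smul,
      add_dotProduct, neg_dotProduct, smul_dotProduct,
      dotProduct_add, dotProduct_neg, dotProduct_smul,
      smul_eq_mul, htSq, hqSt, hqSq]
    ring
  rw [hRHS, hLHS]
  by_cases hQ : Q = 0
  · have hq0 : q = 0 := dotProduct_self_eq_zero.mp hQ
    have hr0 : r = 0 := by rw [hr, hq0]; simp
    simp [hr0, hQ]
  · have hQpos : 0 < Q := lt_of_le_of_ne (dot_self_nonneg' q) (Ne.symm hQ)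
    have hkey : 2 * c * (lam * r) - c * c * (lam * Q) = lam * (r * r / Q) := by
      rw [hc]; field_simp; ring
    nlinarith [mul_nonneg hlam (div_nonneg (mul_self_nonneg r) hQpos.le)]
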